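/- arXiv:2504.17484 — 3 statements merged into one kernel-verified Lean document; each statement's English description precedes it below -/
import Mathlib

section
/- Let A ⊆ Hom_K(F, K̄) and let E ⊆ K̄ be a finite extension of K such that Gal(K̄/E) stabilizes A setwise (so e_{ζ,A}(T) ∈ O_E[T] for every ζ ∈ O_F). If ζ₁, ζ₂ ∈ O_F generate the same O_K-subalgebra of O_F, i.e. O_K[ζ₁] = O_K[ζ₂], then the elements e_{ζ₁,A}(ζ₁⊗1) and e_{ζ₂,A}(ζ₂⊗1) of O_F ⊗_{O_K} O_E differ by a unit: there exists u ∈ (O_F ⊗_{O_K} O_E)^× with e_{ζ₂,A}(ζ₂⊗1) = u · e_{ζ₁,A}(ζ₁⊗1). (Here e_{ζ,A}(ζ⊗1) denotes the evaluation of the polynomial e_{ζ,A}(T) ∈ O_E[T] at ζ⊗1 ∈ O_F ⊗_{O_K} O_E.) -/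
open scoped TensorProduct Polynomial

set_option synthInstance.maxHeartbeats 400000
set_option maxHeartbeats 1000000

noncomputable section

variable (p : ℕ) [Fact p.Prime]

/-- The ring of integers of a `p`-adic field `L`: the integral closure of `ℤₚ` in `L`. -/
def RInt (L : Type) [Field L] [Algebra ℤ_[p] L] : Type := ↥(integralClosure ℤ_[p] L)

local instance instCR (L : Type) [Field L] [Algebra ℤ_[p] L] : CommRing (RInt p L) :=
  inferInstanceAs (CommRing ↥(integralClosure ℤ_[p] L))

local instance instAlgL (L : Type) [Field L] [Algebra ℤ_[p] L] : Algebra (RInt p L) L :=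
  inferInstanceAs (Algebra ↥(integralClosure ℤ_[p] L) L)

/-- Functoriality of rings of integers. -/
def RIntMap (L L' : Type) [Field L] [Field L'] [Algebra ℤ_[p] L] [Algebra ℤ_[p] L']
    (f : L →ₐ[ℤ_[p]] L') : RInt p L →+* RInt p L' :=
  show ↥(integralClosure ℤ_[p] L) →+* ↥(integralClosure ℤ_[p] L') from
  { toFun := fun x => ⟨f x, IsIntegral.map f x.2⟩
    map_one' := by ext; simp
    map_mul' := fun x y => by ext; simp
    map_zero' := by ext; simp
    map_add' := fun x y => by ext; simp }

/-! ### Auxiliary material for `statement0` -/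

section UnitAux

/-- In a commutative ring with finitely many maximal ideals, two elements that
divide each other differ by a unit. -/
theorem exists_unit_eq_of_dvd_dvd {S : Type*} [CommRing S]
    (hfin : {I : Ideal S | I.IsMaximal}.Finite) {a b : S}
    (hab : a ∣ b) (hba : b ∣ a) : ∃ u : Sˣ, b = (u : S) * a := by
  classical
  obtain ⟨x, hx⟩ := hab
  obtain ⟨y, hy⟩ := hba
  haveI : Finite {I : Ideal S | I.IsMaximal} := hfin.to_subtype
  have hcop : Pairwise (Function.onFun IsCoprime fun I : {I : Ideal S | I.IsMaximal} => I.1) := by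
    intro I J hIJ
    exact Ideal.isCoprime_iff_sup_eq.mpr
      (I.2.coprime_of_ne J.2 fun h => hIJ (Subtype.ext h))
  obtain ⟨z, hz⟩ := Ideal.quotientInfToPiQuotient_surj hcop
    (fun I => if x ∈ I.1 then 1 else 0)
  obtain ⟨t, rfl⟩ := Ideal.Quotient.mk_surjective z
  have ht : ∀ I : {I : Ideal S | I.IsMaximal},
      Ideal.Quotient.mk I.1 t = if x ∈ I.1 then 1 else 0 := by
    intro I
    have h1 := congrFun hz I
    rwa [Ideal.quotientInfToPiQuotient_mk'] at h1
  have h0 : (1 - x * y) * a = 0 := by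
    have h1 : a = a * (x * y) := by
      conv_lhs => rw [hy, hx]
      ring
    linear_combination h1
  have hua : (x + t * (1 - x * y)) * a = b := by
    linear_combination t * h0 + hx.symm
  have hunit : IsUnit (x + t * (1 - x * y)) := by
    by_contra hnu
    obtain ⟨m, hm, hum⟩ := Ideal.exists_le_maximal (Ideal.span {x + t * (1 - x * y)})
      (fun hT => hnu (Ideal.span_singleton_eq_top.mp hT))
    have hum' : x + t * (1 - x * y) ∈ m := hum (Ideal.mem_span_singleton_self _)
    have h0m : Ideal.Quotient.mk m (x + t * (1 - x * y)) = 0 :=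
      Ideal.Quotient.eq_zero_iff_mem.mpr hum'
    have htm := ht ⟨m, hm⟩
    by_cases hxm : x ∈ m
    · rw [if_pos hxm] at htm
      have hx0 : Ideal.Quotient.mk m x = 0 := Ideal.Quotient.eq_zero_iff_mem.mpr hxm
      rw [map_add, map_mul, map_sub, map_mul, map_one, hx0, htm, zero_mul, one_mul,
        zero_add, sub_zero] at h0m
      have h1m : (1 : S) ∈ m := by
        rwa [← map_one (Ideal.Quotient.mk m), Ideal.Quotient.eq_zero_iff_mem] at h0m
      exact hm.ne_top ((Ideal.eq_top_iff_one m).mpr h1m)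
    · rw [if_neg hxm] at htm
      rw [map_add, map_mul, htm, zero_mul, add_zero] at h0m
      exact hxm (Ideal.Quotient.eq_zero_iff_mem.mp h0m)
  obtain ⟨u, hu⟩ := hunit
  exact ⟨u, by rw [hu, hua]⟩

/-- A commutative ring that is module-finite over `ℤ_[p]` has only finitely many
maximal ideals. -/
theorem maxIdeals_finite (S : Type*) [CommRing S] [Algebra ℤ_[p] S]
    [Module.Finite ℤ_[p] S] : {I : Ideal S | I.IsMaximal}.Finite := by
  classical
  haveI : Algebra.IsIntegral ℤ_[p] S := Algebra.IsIntegral.of_finite ℤ_[p] S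
  set J : Ideal S := Ideal.span {((p : ℕ) : S)} with hJdef
  have hple : ∀ m : Ideal S, m.IsMaximal → ((p : ℕ) : S) ∈ m := by
    intro m hm
    haveI := hm
    have hcm : (m.comap (algebraMap ℤ_[p] S)).IsMaximal :=
      Ideal.isMaximal_comap_of_isIntegral_of_isMaximal m
    have heq : m.comap (algebraMap ℤ_[p] S) = IsLocalRing.maximalIdeal ℤ_[p] :=
      IsLocalRing.eq_maximalIdeal hcm
    have hp : ((p : ℕ) : ℤ_[p]) ∈ m.comap (algebraMap ℤ_[p] S) := by
      rw [heq, PadicInt.maximalIdeal_eq_span_p]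
      exact Ideal.mem_span_singleton_self _
    rw [Ideal.mem_comap, map_natCast] at hp
    exact hp
  obtain ⟨s, hs⟩ := Module.finite_def.mp (inferInstance : Module.Finite ℤ_[p] S)
  have key : ∀ (a : ℤ_[p]) (x : S),
      Ideal.Quotient.mk J ((ZMod.cast (PadicInt.toZMod a) : ℤ_[p]) • x)
        = Ideal.Quotient.mk J (a • x) := by
    intro a x
    rw [Ideal.Quotient.eq, ← sub_smul]
    have hmem : a - (ZMod.cast (PadicInt.toZMod a) : ℤ_[p])
        ∈ Ideal.span {((p : ℕ) : ℤ_[p])} := by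
      rw [← PadicInt.maximalIdeal_eq_span_p]; exact PadicInt.toZMod_spec a
    obtain ⟨w, hw⟩ := Ideal.mem_span_singleton.mp hmem
    have h2 : (ZMod.cast (PadicInt.toZMod a) : ℤ_[p]) - a = ((p : ℕ) : ℤ_[p]) * (-w) := by
      rw [← neg_sub a, hw]; ring
    rw [h2, Algebra.smul_def, map_mul, map_natCast]
    exact Ideal.mul_mem_right _ _ (Ideal.mul_mem_right _ _ (Ideal.mem_span_singleton_self _))
  have hsurj : Function.Surjective (fun c : {y // y ∈ s} → ZMod p =>
      Ideal.Quotient.mk J (∑ i : {y // y ∈ s}, (ZMod.cast (c i) : ℤ_[p]) • (i : S))) := by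
    intro r0
    obtain ⟨r, rfl⟩ := Ideal.Quotient.mk_surjective r0
    have hr : r ∈ Submodule.span ℤ_[p] (s : Set S) := by rw [hs]; exact Submodule.mem_top
    rw [Submodule.mem_span_finset] at hr
    obtain ⟨c, -, hc⟩ := hr
    refine ⟨fun i => PadicInt.toZMod (c (i : S)), ?_⟩
    simp only
    rw [map_sum]
    have h6 : ∑ i : {y // y ∈ s}, Ideal.Quotient.mk J
          ((ZMod.cast (PadicInt.toZMod (c (i : S))) : ℤ_[p]) • (i : S))
        = ∑ i : {y // y ∈ s}, Ideal.Quotient.mk J ((c (i : S)) • (i : S)) :=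
      Finset.sum_congr rfl (fun i _ => key _ _)
    rw [h6, ← map_sum]
    congr 1
    rw [Finset.sum_coe_sort s (fun y => c y • y)]
    exact hc
  haveI : Finite (S ⧸ J) := Finite.of_surjective _ hsurj
  haveI : Finite (Set (S ⧸ J)) := inferInstanceAs (Finite ((S ⧸ J) → Prop))
  haveI : Finite (Ideal (S ⧸ J)) :=
    Finite.of_injective (fun I : Ideal (S ⧸ J) => (I : Set (S ⧸ J))) SetLike.coe_injective
  rw [← Set.finite_coe_iff]
  refine Finite.of_injective (fun m : {I : Ideal S | I.IsMaximal} =>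
    Ideal.map (Ideal.Quotient.mk J) m.1) ?_
  have hcm : ∀ m : {I : Ideal S | I.IsMaximal},
      Ideal.comap (Ideal.Quotient.mk J) (Ideal.map (Ideal.Quotient.mk J) m.1) = m.1 := by
    intro m
    rw [Ideal.comap_map_of_surjective _ Ideal.Quotient.mk_surjective,
      ← RingHom.ker_eq_comap_bot, Ideal.mk_ker]
    exact sup_eq_left.mpr (Ideal.span_le.mpr (Set.singleton_subset_iff.mpr (hple m.1 m.2)))
  intro m₁ m₂ hm12
  refine Subtype.ext ?_
  rw [← hcm m₁, ← hcm m₂]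
  exact congrArg (Ideal.comap (Ideal.Quotient.mk J)) hm12

end UnitAux

section Galois

variable (K F : Type) [Field K] [Field F] [Algebra K F]

/-- The stabilizer of a finite set of embeddings `F →ₐ[K] K̄` inside `Gal(K̄/K)`:
the set of `σ` with `σ ∘ S = S`. -/
def galStab (S : Finset (F →ₐ[K] AlgebraicClosure K)) :
    Subgroup (AlgebraicClosure K ≃ₐ[K] AlgebraicClosure K) := by
  letI := Classical.decEq (F →ₐ[K] AlgebraicClosure K)
  exact
  { carrier := {σ | S.image (fun φ =>
        ((σ : AlgebraicClosure K →ₐ[K] AlgebraicClosure K)).comp φ) = S}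
    one_mem' := by
      have h : (fun φ : F →ₐ[K] AlgebraicClosure K =>
          (((1 : AlgebraicClosure K ≃ₐ[K] AlgebraicClosure K) :
            AlgebraicClosure K →ₐ[K] AlgebraicClosure K)).comp φ) = id := by
        funext φ; exact AlgHom.ext fun x => rfl
      simp only [Set.mem_setOf_eq, h, Finset.image_id]
    mul_mem' := by
      intro σ τ hσ hτ
      simp only [Set.mem_setOf_eq] at hσ hτ ⊢
      have h : (fun φ : F →ₐ[K] AlgebraicClosure K =>
          (((σ * τ : AlgebraicClosure K ≃ₐ[K] AlgebraicClosure K) :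
            AlgebraicClosure K →ₐ[K] AlgebraicClosure K)).comp φ)
          = (fun φ => ((σ : AlgebraicClosure K →ₐ[K] AlgebraicClosure K)).comp φ) ∘
            (fun φ => ((τ : AlgebraicClosure K →ₐ[K] AlgebraicClosure K)).comp φ) := by
        funext φ; exact AlgHom.ext fun x => rfl
      rw [h, ← Finset.image_image, hτ, hσ]
    inv_mem' := by
      intro σ hσ
      simp only [Set.mem_setOf_eq] at hσ ⊢
      conv_lhs => rw [← hσ]
      rw [Finset.image_image]
      have h : ((fun φ : F →ₐ[K] AlgebraicClosure K =>
          (((σ⁻¹ : AlgebraicClosure K ≃ₐ[K] AlgebraicClosure K) :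
            AlgebraicClosure K →ₐ[K] AlgebraicClosure K)).comp φ) ∘
          (fun φ => ((σ : AlgebraicClosure K →ₐ[K] AlgebraicClosure K)).comp φ)) = id := by
        funext φ
        exact AlgHom.ext fun x => σ.symm_apply_apply (φ x)
      rw [h, Finset.image_id] }

/-- The reflex field `E_S ⊆ K̄` of a set `S` of embeddings `F →ₐ[K] K̄`: the fixed field
of its stabilizer in `Gal(K̄/K)`. -/
def reflexField (S : Finset (F →ₐ[K] AlgebraicClosure K)) :
    IntermediateField K (AlgebraicClosure K) :=
  IntermediateField.fixedField (galStab K F S)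

end Galois

section Eis

/- `K` is a finite extension of `ℚₚ` (with its induced `ℤₚ`-algebra structure), `F` is a
finite extension of `K`, and `E` is a further finite extension of `K` equipped with a
`K`-embedding `ιE : E → K̄` realizing it as a subfield of an algebraic closure of `K`. -/
variable (K : Type) [Field K] [Algebra ℚ_[p] K] [FiniteDimensional ℚ_[p] K]
  [Algebra ℤ_[p] K] [IsScalarTower ℤ_[p] ℚ_[p] K]
variable (F : Type) [Field F] [Algebra K F] [FiniteDimensional K F]
  [Algebra ℤ_[p] F] [IsScalarTower ℤ_[p] K F]
variable (E : Type) [Field E] [Algebra K E] [Algebra ℤ_[p] E] [IsScalarTower ℤ_[p] K E]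

local instance algOKOF : Algebra (RInt p K) (RInt p F) :=
  (RIntMap p K F (IsScalarTower.toAlgHom ℤ_[p] K F)).toAlgebra

local instance algOKOE : Algebra (RInt p K) (RInt p E) :=
  (RIntMap p K E (IsScalarTower.toAlgHom ℤ_[p] K E)).toAlgebra

variable (ιE : E →ₐ[K] AlgebraicClosure K)

/-- The canonical map `O_E → K̄` induced by `ιE : E → K̄`. -/
def OEtoKb : RInt p E →+* AlgebraicClosure K :=
  (ιE : E →+* AlgebraicClosure K).comp (algebraMap (RInt p E) E)

/-- `Q ∈ O_E[T]` represents the Eisenstein polynomial `e_{ζ,S}(T) = ∏_{φ ∈ S} (T - φ(ζ))`. -/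
def IsEisPoly (S : Finset (F →ₐ[K] AlgebraicClosure K)) (ζ : RInt p F)
    (Q : Polynomial (RInt p E)) : Prop :=
  Q.map (OEtoKb p K E ιE) =
    ∏ φ ∈ S, (Polynomial.X - Polynomial.C (φ (algebraMap (RInt p F) F ζ)))

variable (R : Type) [CommRing R] [Algebra (RInt p K) R] [Algebra (RInt p E) R]

/-- The element `e_S = e_{ζ,S}(ζ ⊗ 1)` of `O_F ⊗_{O_K} R`, where `Q ∈ O_E[T]`
represents the Eisenstein polynomial `e_{ζ,S}(T)`. -/
def eElt (Q : Polynomial (RInt p E)) (ζ : RInt p F) : (RInt p F) ⊗[RInt p K] R :=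
  Polynomial.eval₂
    ((Algebra.TensorProduct.includeRight :
        R →ₐ[RInt p K] (RInt p F) ⊗[RInt p K] R).toRingHom.comp (algebraMap (RInt p E) R))
    (ζ ⊗ₜ[RInt p K] (1 : R)) Q

/-- The Eisenstein ideal `J_{S,R} ⊆ O_F ⊗_{O_K} R`, generated by `e_S`. -/
def JIdeal (Q : Polynomial (RInt p E)) (ζ : RInt p F) :
    Ideal ((RInt p F) ⊗[RInt p K] R) :=
  Ideal.span {eElt p K F E R Q ζ}

local instance algOKKb : Algebra (RInt p K) (AlgebraicClosure K) :=
  ((algebraMap K (AlgebraicClosure K)).comp (algebraMap (RInt p K) K)).toAlgebra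

/-- The restriction of an embedding `φ : F →ₐ[K] K̄` to the ring of integers, as an
`O_K`-algebra homomorphism `O_F →ₐ[O_K] K̄`. -/
def embToKb (φ : F →ₐ[K] AlgebraicClosure K) : RInt p F →ₐ[RInt p K] AlgebraicClosure K where
  toRingHom := (φ : F →+* AlgebraicClosure K).comp (algebraMap (RInt p F) F)
  commutes' := fun r => by
    have h1 : (algebraMap (RInt p F) F) ((algebraMap (RInt p K) (RInt p F)) r)
        = algebraMap K F ((algebraMap (RInt p K) K) r) := by
      show algebraMap K F ((IsScalarTower.toAlgHom ℤ_[p] K K) ((algebraMap (RInt p K) K) r)) = _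
      rfl
    show φ ((algebraMap (RInt p F) F) ((algebraMap (RInt p K) (RInt p F)) r)) = _
    rw [h1, φ.commutes]
    rfl

/-- The inclusion `O_E → K̄` as an `O_K`-algebra homomorphism. -/
def oEToKb : RInt p E →ₐ[RInt p K] AlgebraicClosure K where
  toRingHom := OEtoKb p K E ιE
  commutes' := fun r => by
    have h1 : (algebraMap (RInt p E) E) ((algebraMap (RInt p K) (RInt p E)) r)
        = algebraMap K E ((algebraMap (RInt p K) K) r) := by
      show algebraMap K E ((IsScalarTower.toAlgHom ℤ_[p] K K) ((algebraMap (RInt p K) K) r)) = _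
      rfl
    show ιE ((algebraMap (RInt p E) E) ((algebraMap (RInt p K) (RInt p E)) r)) = _
    rw [h1, ιE.commutes]
    rfl

/-- The map `O_F ⊗_{O_K} O_E → K̄` whose value on `a ⊗ e` is `φ(a)·e`. -/
def phiComponent (φ : F →ₐ[K] AlgebraicClosure K) :
    (RInt p F) ⊗[RInt p K] (RInt p E) →ₐ[RInt p K] AlgebraicClosure K :=
  Algebra.TensorProduct.productMap (embToKb p K F φ) (oEToKb p K E ιE)

local instance instAlgZp (L : Type) [Field L] [Algebra ℤ_[p] L] : Algebra ℤ_[p] (RInt p L) :=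
  inferInstanceAs (Algebra ℤ_[p] ↥(integralClosure ℤ_[p] L))

local instance instTowerZp (L : Type) [Field L] [Algebra ℤ_[p] L] :
    IsScalarTower ℤ_[p] (RInt p L) L :=
  inferInstanceAs (IsScalarTower ℤ_[p] ↥(integralClosure ℤ_[p] L) L)

local instance instICl (L : Type) [Field L] [Algebra ℤ_[p] L] :
    IsIntegralClosure (RInt p L) ℤ_[p] L :=
  inferInstanceAs (IsIntegralClosure ↥(integralClosure ℤ_[p] L) ℤ_[p] L)

/-- The standard ring homomorphism `O_E → O_F ⊗ O_E` used in `eElt`. -/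
def gE : RInt p E →+* (RInt p F) ⊗[RInt p K] (RInt p E) :=
  ((Algebra.TensorProduct.includeRight :
      (RInt p E) →ₐ[RInt p K] (RInt p F) ⊗[RInt p K] (RInt p E))).toRingHom.comp
    (algebraMap (RInt p E) (RInt p E))

theorem eElt_eq (Q : Polynomial (RInt p E)) (ζ : RInt p F) :
    eElt p K F E (RInt p E) Q ζ
      = Polynomial.eval₂ (gE p K F E) (ζ ⊗ₜ[RInt p K] (1 : RInt p E)) Q := rfl

/-- One-sided divisibility between Eisenstein elements. -/
theorem eElt_dvd_aux (A : Finset (F →ₐ[K] AlgebraicClosure K))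
    (ζ ξ : RInt p F) (P : Polynomial (RInt p K)) (hP : Polynomial.aeval ξ P = ζ)
    (Q Q' : Polynomial (RInt p E))
    (hQ : IsEisPoly p K F E ιE A ζ Q) (hQ' : IsEisPoly p K F E ιE A ξ Q') :
    eElt p K F E (RInt p E) Q' ξ ∣ eElt p K F E (RInt p E) Q ζ := by
  have hQe : Q.map (OEtoKb p K E ιE) = ∏ φ ∈ A,
      (Polynomial.X - Polynomial.C (φ (algebraMap (RInt p F) F ζ))) := hQ
  have hQ'e : Q'.map (OEtoKb p K E ιE) = ∏ φ ∈ A,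
      (Polynomial.X - Polynomial.C (φ (algebraMap (RInt p F) F ξ))) := hQ'
  have hinjE : Function.Injective (OEtoKb p K E ιE) := by
    intro a b hab
    exact IsIntegralClosure.algebraMap_injective (RInt p E) ℤ_[p] E
      (ιE.toRingHom.injective hab)
  have hmQ' : Q'.Monic := Polynomial.monic_of_injective hinjE (by
    rw [hQ'e]
    exact Polynomial.monic_prod_of_monic _ _ fun φ _ => Polynomial.monic_X_sub_C _)
  set Pe : Polynomial (RInt p E) := P.map (algebraMap (RInt p K) (RInt p E)) with hPedef
  have hdvd : Q' ∣ Q.comp Pe := by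
    rw [← Polynomial.map_dvd_map (OEtoKb p K E ιE) hinjE hmQ', Polynomial.map_comp, hQ'e, hQe]
    have hPbar : Pe.map (OEtoKb p K E ιE)
        = P.map (algebraMap (RInt p K) (AlgebraicClosure K)) := by
      rw [hPedef, Polynomial.map_map]
      congr 1
      refine RingHom.ext fun c => ?_
      exact (oEToKb p K E ιE).commutes c
    rw [hPbar, Polynomial.prod_comp]
    apply Finset.prod_dvd_prod_of_dvd
    intro φ hφ
    rw [Polynomial.sub_comp, Polynomial.X_comp, Polynomial.C_comp, Polynomial.dvd_iff_isRoot]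
    show Polynomial.eval _ _ = 0
    rw [Polynomial.eval_sub, Polynomial.eval_C, sub_eq_zero, Polynomial.eval_map,
      ← Polynomial.aeval_def]
    have h4 : Polynomial.aeval ((embToKb p K F φ) ξ) P
        = (embToKb p K F φ) (Polynomial.aeval ξ P) :=
      Polynomial.aeval_algHom_apply (embToKb p K F φ) ξ P
    rw [hP] at h4
    exact h4
  obtain ⟨R₁, hR₁⟩ := hdvd
  have heval : Polynomial.eval₂ (gE p K F E) (ξ ⊗ₜ[RInt p K] (1 : RInt p E)) Pe
      = ζ ⊗ₜ[RInt p K] (1 : RInt p E) := by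
    rw [hPedef, Polynomial.eval₂_map]
    have hg2 : (gE p K F E).comp (algebraMap (RInt p K) (RInt p E))
        = algebraMap (RInt p K) ((RInt p F) ⊗[RInt p K] (RInt p E)) := by
      refine RingHom.ext fun c => ?_
      show (Algebra.TensorProduct.includeRight :
          (RInt p E) →ₐ[RInt p K] (RInt p F) ⊗[RInt p K] (RInt p E))
        (algebraMap (RInt p E) (RInt p E) (algebraMap (RInt p K) (RInt p E) c)) = _
      rw [Algebra.algebraMap_self, RingHom.id_apply]
      exact (Algebra.TensorProduct.includeRight :
        (RInt p E) →ₐ[RInt p K] (RInt p F) ⊗[RInt p K] (RInt p E)).commutes c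
    rw [hg2, ← Polynomial.aeval_def]
    have h5 : Polynomial.aeval ((Algebra.TensorProduct.includeLeft :
          (RInt p F) →ₐ[RInt p K] (RInt p F) ⊗[RInt p K] (RInt p E)) ξ) P
        = (Algebra.TensorProduct.includeLeft :
          (RInt p F) →ₐ[RInt p K] (RInt p F) ⊗[RInt p K] (RInt p E)) (Polynomial.aeval ξ P) :=
      Polynomial.aeval_algHom_apply _ ξ P
    rw [hP] at h5
    exact h5
  have hcompQ : eElt p K F E (RInt p E) Q ζ
      = eElt p K F E (RInt p E) (Q.comp Pe) ξ := by
    rw [eElt_eq, eElt_eq, Polynomial.eval₂_comp, heval]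
  refine ⟨Polynomial.eval₂ (gE p K F E) (ξ ⊗ₜ[RInt p K] (1 : RInt p E)) R₁, ?_⟩
  rw [hcompQ, hR₁, eElt_eq, eElt_eq]
  exact Polynomial.eval₂_mul _ _

/-- Lemma 2.1 of the paper. Let `A ⊆ Hom_K(F, K̄)` and let `E/K` be a
finite extension (embedded in `K̄` via `ιE`) such that `Gal(K̄/E)` stabilizes `A` setwise.
If `ζ₁, ζ₂ ∈ O_F` generate the same `O_K`-subalgebra of `O_F`, then the elements
`e_{ζ₁,A}(ζ₁ ⊗ 1)` and `e_{ζ₂,A}(ζ₂ ⊗ 1)` of `O_F ⊗_{O_K} O_E` differ by a unit. -/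
theorem statement0 [FiniteDimensional K E]
    (A : Finset (F →ₐ[K] AlgebraicClosure K))
    (hstab : ∀ σ : AlgebraicClosure K ≃ₐ[K] AlgebraicClosure K,
      (∀ x ∈ ιE.fieldRange, σ x = x) → σ ∈ galStab K F A)
    (ζ₁ ζ₂ : RInt p F)
    (hgen : Algebra.adjoin (RInt p K) {ζ₁} = Algebra.adjoin (RInt p K) {ζ₂})
    (Q₁ Q₂ : Polynomial (RInt p E))
    (hQ₁ : IsEisPoly p K F E ιE A ζ₁ Q₁) (hQ₂ : IsEisPoly p K F E ιE A ζ₂ Q₂) :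
    ∃ u : ((RInt p F) ⊗[RInt p K] (RInt p E))ˣ,
      eElt p K F E (RInt p E) Q₂ ζ₂ = (u : (RInt p F) ⊗[RInt p K] (RInt p E)) *
        eElt p K F E (RInt p E) Q₁ ζ₁ := by
  classical
  obtain ⟨P₁, hP₁⟩ : ∃ P : Polynomial (RInt p K), Polynomial.aeval ζ₁ P = ζ₂ := by
    have h2 : ζ₂ ∈ Algebra.adjoin (RInt p K) {ζ₁} := by
      rw [hgen]; exact Algebra.self_mem_adjoin_singleton _ _
    rw [Algebra.adjoin_singleton_eq_range_aeval, AlgHom.mem_range] at h2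
    exact h2
  obtain ⟨P₂, hP₂⟩ : ∃ P : Polynomial (RInt p K), Polynomial.aeval ζ₂ P = ζ₁ := by
    have h2 : ζ₁ ∈ Algebra.adjoin (RInt p K) {ζ₂} := by
      rw [← hgen]; exact Algebra.self_mem_adjoin_singleton _ _
    rw [Algebra.adjoin_singleton_eq_range_aeval, AlgHom.mem_range] at h2
    exact h2
  have hr : eElt p K F E (RInt p E) Q₁ ζ₁ ∣ eElt p K F E (RInt p E) Q₂ ζ₂ :=
    eElt_dvd_aux p K F E ιE A ζ₂ ζ₁ P₁ hP₁ Q₂ Q₁ hQ₂ hQ₁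
  have hs : eElt p K F E (RInt p E) Q₂ ζ₂ ∣ eElt p K F E (RInt p E) Q₁ ζ₁ :=
    eElt_dvd_aux p K F E ιE A ζ₁ ζ₂ P₂ hP₂ Q₁ Q₂ hQ₁ hQ₂
  -- Finiteness of the set of maximal ideals of `O_F ⊗ O_E`.
  letI : Algebra ℚ_[p] F := ((algebraMap K F).comp (algebraMap ℚ_[p] K)).toAlgebra
  haveI : IsScalarTower ℚ_[p] K F := IsScalarTower.of_algebraMap_eq fun x => rfl
  haveI : IsScalarTower ℤ_[p] ℚ_[p] F := IsScalarTower.of_algebraMap_eq fun x => by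
    show algebraMap ℤ_[p] F x = algebraMap K F (algebraMap ℚ_[p] K (algebraMap ℤ_[p] ℚ_[p] x))
    rw [← IsScalarTower.algebraMap_apply ℤ_[p] ℚ_[p] K,
      ← IsScalarTower.algebraMap_apply ℤ_[p] K F]
  haveI : FiniteDimensional ℚ_[p] F := Module.Finite.trans K F
  letI : Algebra ℚ_[p] E := ((algebraMap K E).comp (algebraMap ℚ_[p] K)).toAlgebra
  haveI : IsScalarTower ℚ_[p] K E := IsScalarTower.of_algebraMap_eq fun x => rfl
  haveI : IsScalarTower ℤ_[p] ℚ_[p] E := IsScalarTower.of_algebraMap_eq fun x => by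
    show algebraMap ℤ_[p] E x = algebraMap K E (algebraMap ℚ_[p] K (algebraMap ℤ_[p] ℚ_[p] x))
    rw [← IsScalarTower.algebraMap_apply ℤ_[p] ℚ_[p] K,
      ← IsScalarTower.algebraMap_apply ℤ_[p] K E]
  haveI : FiniteDimensional ℚ_[p] E := Module.Finite.trans K E
  haveI hOF : Module.Finite ℤ_[p] (RInt p F) :=
    IsIntegralClosure.finite ℤ_[p] ℚ_[p] F (RInt p F)
  haveI hOE : Module.Finite ℤ_[p] (RInt p E) :=
    IsIntegralClosure.finite ℤ_[p] ℚ_[p] E (RInt p E)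
  haveI : IsScalarTower ℤ_[p] (RInt p K) (RInt p F) :=
    IsScalarTower.of_algebraMap_eq fun c => Subtype.ext (by
      show algebraMap ℤ_[p] F c = algebraMap K F (algebraMap ℤ_[p] K c)
      rw [← IsScalarTower.algebraMap_apply ℤ_[p] K F])
  haveI : IsScalarTower ℤ_[p] (RInt p K) (RInt p E) :=
    IsScalarTower.of_algebraMap_eq fun c => Subtype.ext (by
      show algebraMap ℤ_[p] E c = algebraMap K E (algebraMap ℤ_[p] K c)
      rw [← IsScalarTower.algebraMap_apply ℤ_[p] K E])
  haveI : SMulCommClass (RInt p K) ℤ_[p] (RInt p F) :=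
    ⟨fun r z x => by simp only [Algebra.smul_def]; ring⟩
  let fL : RInt p F →ₐ[ℤ_[p]] (RInt p F) ⊗[RInt p K] (RInt p E) :=
    Algebra.TensorProduct.includeLeft
  let gR : RInt p E →ₐ[ℤ_[p]] (RInt p F) ⊗[RInt p K] (RInt p E) :=
    { (Algebra.TensorProduct.includeRight :
        (RInt p E) →ₐ[RInt p K] (RInt p F) ⊗[RInt p K] (RInt p E)).toRingHom with
      commutes' := fun c => by
        show (1 : RInt p F) ⊗ₜ[RInt p K] (algebraMap ℤ_[p] (RInt p E) c)
          = algebraMap ℤ_[p] ((RInt p F) ⊗[RInt p K] (RInt p E)) c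
        rw [IsScalarTower.algebraMap_apply ℤ_[p] (RInt p K) (RInt p E) c,
          Algebra.TensorProduct.algebraMap_apply,
          IsScalarTower.algebraMap_apply ℤ_[p] (RInt p K) (RInt p F) c]
        exact Algebra.TensorProduct.includeRight.commutes _ }
  have hsurjT : Function.Surjective (Algebra.TensorProduct.productMap fL gR) := by
    intro z
    induction z using TensorProduct.induction_on with
    | zero => exact ⟨0, map_zero _⟩
    | tmul a b =>
      refine ⟨a ⊗ₜ[ℤ_[p]] b, ?_⟩
      rw [Algebra.TensorProduct.productMap_apply_tmul]
      show (a ⊗ₜ[RInt p K] (1 : RInt p E)) * ((1 : RInt p F) ⊗ₜ[RInt p K] b)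
        = a ⊗ₜ[RInt p K] b
      rw [Algebra.TensorProduct.tmul_mul_tmul, mul_one, one_mul]
    | add u v hu hv =>
      obtain ⟨u', hu'⟩ := hu
      obtain ⟨v', hv'⟩ := hv
      exact ⟨u' + v', by rw [map_add, hu', hv']⟩
  haveI : Module.Finite ℤ_[p] ((RInt p F) ⊗[RInt p K] (RInt p E)) :=
    Module.Finite.of_surjective (Algebra.TensorProduct.productMap fL gR).toLinearMap hsurjT
  exact exists_unit_eq_of_dvd_dvd (maxIdeals_finite p _) hr hs


end Eis

end
end

section
/- Let R be a commutative local ring with residue field k, let L be a finite free R-module of rank m, and let f : L → L be an R-linear endomorphism. Set s := dim_k((L/f(L)) ⊗_R k) and d := m − s, and assume that the (d+1)-st exterior power of f vanishes: ⋀_R^{d+1} f = 0. Then L/f(L) is a free R-module of rank s. -/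
open scoped TensorProduct

/-!
**Statement 8** (Lemma 2.12 of the paper, after [RZ17, Lemma 4.9]).

Let `R` be a commutative local ring with residue field `k`, let `L` be a finite free
`R`-module of rank `m`, and `f : L → L` an `R`-linear endomorphism.  Set
`s := dim_k ((L/f(L)) ⊗_R k)` and `d := m − s`, and assume that the `(d+1)`-st exterior
power of `f` vanishes.  Then `L/f(L)` is a free `R`-module of rank `s`.

The vanishing of `⋀^{d+1} f` is expressed as: the algebra map `ExteriorAlgebra.map f`
induced by `f` on the exterior algebra vanishes on the `(d+1)`-st exterior power
`⋀[R]^(d+1) L`.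
-/




lemma aux_alt_zero {R M : Type*} [CommRing R] [AddCommGroup M] [Module R M]
    {n : ℕ} (φ : M [⋀^Fin n]→ₗ[R] R) {v : Fin n → M}
    (h : ExteriorAlgebra.ιMulti R n v = 0) : φ v = 0 := by
  classical
  have := ExteriorAlgebra.liftAlternating_apply_ιMulti
      (Function.update (fun i => (0 : M [⋀^Fin i]→ₗ[R] R)) n φ) v
  rw [h, map_zero] at this
  simpa using this.symm

lemma aux_repr_zero {R M : Type*} [CommRing R] [AddCommGroup M] [Module R M]
    {d s' : ℕ} (b : Module.Basis (Fin d ⊕ Fin s') R M) (z : M) (j : Fin s')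
    (h : ExteriorAlgebra.ιMulti R (d+1) (Fin.cons z (fun i => b (Sum.inl i))) = 0) :
    b.repr z (Sum.inr j) = 0 := by
  classical
  set idx : Fin (d+1) → (Fin d ⊕ Fin s') := Fin.cons (Sum.inr j) (fun i => Sum.inl i) with hidx
  set g : M →ₗ[R] (Fin (d+1) → R) := LinearMap.pi (fun t => b.coord (idx t)) with hg
  set φ : M [⋀^Fin (d+1)]→ₗ[R] R := (Matrix.detRowAlternating).compLinearMap g with hφ
  set rest : Fin d → M := fun i => b (Sum.inl i) with hrest
  have h0 : φ (Fin.cons z rest) = 0 := aux_alt_zero φ h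
  have fact1 : ∀ (i : Fin d ⊕ Fin s') (u : Fin (d+1)),
      g (b i) u = if i = idx u then 1 else 0 := by
    intro i u
    rw [hg]
    simp only [LinearMap.pi_apply, Module.Basis.coord_apply, Module.Basis.repr_self, Finsupp.single_apply]
  set ψ : M →ₗ[R] R :=
  { toFun := fun z => φ.curryLeft z rest
    map_add' := fun z1 z2 => by simp only [map_add, AlternatingMap.add_apply]
    map_smul' := fun c z1 => by
      simp only [map_smul, AlternatingMap.smul_apply, RingHom.id_apply, smul_eq_mul] } with hψ
  have hψ_eq : ψ = b.coord (Sum.inr j) := by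
    apply b.ext
    intro i
    have hrhs : b.coord (Sum.inr j) (b i) = if i = Sum.inr j then 1 else 0 := by
      rw [Module.Basis.coord_apply, Module.Basis.repr_self, Finsupp.single_apply]
    rw [hrhs]
    rcases i with t | t
    · rw [if_neg (by simp)]
      show φ (Matrix.vecCons (b (Sum.inl t)) rest) = 0
      refine φ.map_eq_zero_of_eq _ (i := 0) (j := t.succ) ?_ (Fin.succ_ne_zero t).symm
      simp [rest]
    · by_cases ht : t = j
      · subst ht
        rw [if_pos rfl]
        show φ (Matrix.vecCons (b (Sum.inr t)) rest) = 1
        rw [hφ, AlternatingMap.compLinearMap_apply]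
        have hmat : (⇑g ∘ Matrix.vecCons (b (Sum.inr t)) rest)
            = (1 : Matrix (Fin (d+1)) (Fin (d+1)) R) := by
          funext a u
          show g (Matrix.vecCons (b (Sum.inr t)) rest a) u
            = (1 : Matrix (Fin (d+1)) (Fin (d+1)) R) a u
          rw [Matrix.one_apply]
          refine Fin.cases ?_ (fun a' => ?_) a
          · rw [Matrix.cons_val_zero, fact1]
            refine Fin.cases ?_ (fun u' => ?_) u
            · rw [if_pos (by rw [hidx]; simp), if_pos rfl]
            · rw [if_neg (by rw [hidx]; simp), if_neg (Ne.symm (Fin.succ_ne_zero u'))]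
          · rw [Matrix.cons_val_succ]
            show g (b (Sum.inl a')) u = _
            rw [fact1]
            refine Fin.cases ?_ (fun u' => ?_) u
            · rw [if_neg (by rw [hidx]; simp), if_neg (Fin.succ_ne_zero a')]
            · by_cases hu : a' = u'
              · subst hu
                rw [if_pos (by rw [hidx]; simp), if_pos rfl]
              · rw [if_neg (by rw [hidx]; simp [hu]),
                  if_neg (by simpa [Fin.succ_inj] using hu)]
        show Matrix.detRowAlternating (⇑g ∘ Matrix.vecCons (b (Sum.inr t)) rest) = 1
        rw [hmat]
        exact Matrix.det_one
      · rw [if_neg (by simpa using ht)]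
        show φ (Matrix.vecCons (b (Sum.inr t)) rest) = 0
        rw [hφ, AlternatingMap.compLinearMap_apply]
        refine Matrix.det_eq_zero_of_row_eq_zero 0 (fun u => ?_)
        show g (b (Sum.inr t)) u = 0
        rw [fact1, if_neg]
        refine Fin.cases ?_ (fun u' => ?_) u
        · rw [hidx]; simp [ht]
        · rw [hidx]; simp
  have h1 : ψ z = 0 := h0
  rw [hψ_eq] at h1
  simpa [Module.Basis.coord_apply] using h1


lemma aux_basis_of_tmul {R : Type} [CommRing R] [IsLocalRing R]
    {L : Type} [AddCommGroup L] [Module R L] [Module.Free R L] [Module.Finite R L]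
    {ι : Type} [Fintype ι] (B : ι → L)
    (bk : Module.Basis ι (IsLocalRing.ResidueField R) (IsLocalRing.ResidueField R ⊗[R] L))
    (hB : ∀ i, (1 : IsLocalRing.ResidueField R) ⊗ₜ[R] B i = bk i)
    (hcard : Fintype.card ι = Module.finrank R L) :
    ∃ b : Module.Basis ι R L, ∀ i, b i = B i := by
  classical
  have hspan : Submodule.span R (Set.range B) = ⊤ :=
    IsLocalRing.span_eq_top_of_tmul_eq_basis B bk hB
  set T := Finsupp.linearCombination R B with hT
  have hTsurj : Function.Surjective T := by
    rw [← LinearMap.range_eq_top, Finsupp.range_linearCombination, hspan]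
  -- transport to an endomorphism
  let b0 := Module.Free.chooseBasis R L
  have hcard2 : Fintype.card (Module.Free.ChooseBasisIndex R L) = Fintype.card ι := by
    rw [hcard, Module.finrank_eq_card_chooseBasisIndex]
  let e2 : L ≃ₗ[R] (ι →₀ R) :=
    b0.repr ≪≫ₗ Finsupp.domLCongr (Fintype.equivOfCardEq hcard2)
  have hinj : Function.Injective (e2.toLinearMap ∘ₗ T) := by
    apply OrzechProperty.injective_of_surjective_endomorphism
    exact (e2.surjective).comp hTsurj
  have hTinj : Function.Injective T := by
    intro x y hxy
    exact hinj (by simp [LinearMap.comp_apply, hxy])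
  have hli : LinearIndependent R B :=
    linearIndependent_iff_injective_finsuppLinearCombination.mpr hTinj
  refine ⟨Module.Basis.mk hli (by rw [hspan]), fun i => Module.Basis.mk_apply hli _ i⟩

lemma aux_quot {R M : Type} [CommRing R] [AddCommGroup M] [Module R M]
    {α β : Type} [Fintype α] [Fintype β] [DecidableEq α] [DecidableEq β]
    (b : Module.Basis (α ⊕ β) R M) :
    Nonempty ((M ⧸ Submodule.span R (Set.range (fun i => b (Sum.inl i)))) ≃ₗ[R] (β →₀ R)) := by
  classical
  set q : M →ₗ[R] (β →₀ R) :=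
    (Finsupp.lcomapDomain Sum.inr Sum.inr_injective) ∘ₗ (b.repr : M →ₗ[R] ((α ⊕ β) →₀ R))
    with hq
  have hq_apply : ∀ x (j : β), q x j = b.repr x (Sum.inr j) := by
    intro x j
    simp [hq, Finsupp.lcomapDomain, Finsupp.comapDomain]
  have hqsurj : Function.Surjective q := by
    intro l
    refine ⟨b.repr.symm (l.mapDomain Sum.inr), ?_⟩
    ext j
    rw [hq_apply, LinearEquiv.apply_symm_apply, Finsupp.mapDomain_apply Sum.inr_injective]
  have hker : LinearMap.ker q = Submodule.span R (Set.range (fun i => b (Sum.inl i))) := by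
    ext x
    have : Set.range (fun i => b (Sum.inl i)) = b '' (Set.range Sum.inl) := by
      rw [← Set.range_comp]; rfl
    rw [this, Module.Basis.mem_span_image, LinearMap.mem_ker]
    constructor
    · intro hx i hi
      rcases i with t | t
      · exact ⟨t, rfl⟩
      · exfalso
        apply Finsupp.mem_support_iff.mp hi
        rw [← hq_apply, hx]
        rfl
    · intro hx
      ext j
      rw [hq_apply]
      by_contra hne
      rcases hx (Finsupp.mem_support_iff.mpr (by simpa using hne)) with ⟨t, ht⟩
      exact (Sum.inl_ne_inr ht).elim
  exact ⟨(Submodule.quotEquivOfEq _ _ hker.symm) ≪≫ₗ q.quotKerEquivOfSurjective hqsurj⟩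

theorem statement8 (R : Type) [CommRing R] [IsLocalRing R]
    (L : Type) [AddCommGroup L] [Module R L]
    [Module.Free R L] [Module.Finite R L]
    (m : ℕ) (hm : Module.finrank R L = m)
    (f : L →ₗ[R] L)
    (s : ℕ)
    (hs : s = Module.finrank (IsLocalRing.ResidueField R)
      ((IsLocalRing.ResidueField R) ⊗[R] (L ⧸ LinearMap.range f)))
    (d : ℕ) (hd : d = m - s)
    (hf : ∀ w ∈ ⋀[R]^(d+1) L, ExteriorAlgebra.map f w = 0) :
    Module.Free R (L ⧸ LinearMap.range f) ∧
      Module.finrank R (L ⧸ LinearMap.range f) = s := by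
  classical
  set k := IsLocalRing.ResidueField R with hk
  set fk := f.baseChange k with hfk
  set qk := (LinearMap.range f).mkQ.baseChange k with hqk
  have hfk_coe : ∀ z, fk z = f.lTensor k z :=
    fun z => congrFun (LinearMap.baseChange_eq_ltensor f) z
  have hqk_coe : ∀ z, qk z = (LinearMap.range f).mkQ.lTensor k z :=
    fun z => congrFun (LinearMap.baseChange_eq_ltensor _) z
  have hfinL : Module.finrank k (k ⊗[R] L) = m := by
    rw [Module.finrank_baseChange, hm]
  have hexact : Function.Exact (f.lTensor k) ((LinearMap.range f).mkQ.lTensor k) :=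
    lTensor_exact k (LinearMap.exact_iff.mpr (Submodule.ker_mkQ _))
      (Submodule.mkQ_surjective _)
  have hkerqk : LinearMap.ker qk = LinearMap.range fk := by
    ext z
    rw [LinearMap.mem_ker, LinearMap.mem_range]
    constructor
    · intro hz
      obtain ⟨w, hw⟩ := (hexact z).mp (by rw [← hqk_coe z, hz])
      exact ⟨w, by rw [hfk_coe, hw]⟩
    · rintro ⟨w, rfl⟩
      rw [hqk_coe, hfk_coe]
      exact (hexact _).mpr ⟨w, rfl⟩
  have hqksurj : Function.Surjective qk := by
    intro z
    obtain ⟨w, hw⟩ :=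
      LinearMap.lTensor_surjective k (Submodule.mkQ_surjective (LinearMap.range f)) z
    exact ⟨w, by rw [hqk_coe, hw]⟩
  have hrangeqk : LinearMap.range qk = ⊤ := LinearMap.range_eq_top.mpr hqksurj
  have hrank_nullity := LinearMap.finrank_range_add_finrank_ker qk
  rw [hrangeqk, finrank_top, hfinL, hkerqk, ← hs] at hrank_nullity
  -- hrank_nullity : s + finrank k (range fk) = m
  have hdm : Module.finrank k (LinearMap.range fk) = d := by omega
  have hds : d + s = m := by omega
  set W := LinearMap.range fk with hW
  obtain ⟨W', hWc⟩ := Submodule.exists_isCompl W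
  have hW's : Module.finrank k W' = s := by
    have h2 := Submodule.finrank_add_eq_of_isCompl hWc
    rw [hdm, hfinL] at h2
    omega
  let bW : Module.Basis (Fin d) k W := (by haveI := Module.Free.of_divisionRing k W; exact Module.finBasis k W : Module.Basis (Fin (Module.finrank k W)) k W).reindex (finCongr hdm)
  let bW' : Module.Basis (Fin s) k W' := (by haveI := Module.Free.of_divisionRing k W'; exact Module.finBasis k W' : Module.Basis (Fin (Module.finrank k W')) k W').reindex (finCongr hW's)
  set bk2 : Module.Basis (Fin d ⊕ Fin s) k (k ⊗[R] L) :=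
    (bW.prod bW').map (Submodule.prodEquivOfIsCompl W W' hWc) with hbk2
  have hbk2_inl : ∀ i, bk2 (Sum.inl i) = (bW i : k ⊗[R] L) := by
    intro i
    rw [hbk2, Module.Basis.map_apply, Module.Basis.prod_apply]
    simp [Submodule.coe_prodEquivOfIsCompl']
  have hbk2_inr : ∀ j, bk2 (Sum.inr j) = (bW' j : k ⊗[R] L) := by
    intro j
    rw [hbk2, Module.Basis.map_apply, Module.Basis.prod_apply]
    simp [Submodule.coe_prodEquivOfIsCompl']
  have hπ : Function.Surjective (TensorProduct.mk R k L 1) :=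
    TensorProduct.mk_surjective R L k Ideal.Quotient.mk_surjective
  have hlift1 : ∀ i : Fin d, ∃ z : L, (1:k) ⊗ₜ[R] (f z) = bk2 (Sum.inl i) := by
    intro i
    obtain ⟨u, hu⟩ := LinearMap.mem_range.mp (bW i).2
    obtain ⟨z, hz⟩ := hπ u
    refine ⟨z, ?_⟩
    rw [hbk2_inl, ← hu, ← hz]
    simp [hfk]
  have hlift2 : ∀ j : Fin s, ∃ z : L, (1:k) ⊗ₜ[R] z = bk2 (Sum.inr j) := fun j => hπ _
  choose x hx using hlift1
  choose y hy using hlift2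
  set B : Fin d ⊕ Fin s → L := Sum.elim (fun i => f (x i)) y with hBdef
  have hB : ∀ i, (1:k) ⊗ₜ[R] B i = bk2 i := by rintro (i|j); exacts [hx i, hy j]
  have hcard : Fintype.card (Fin d ⊕ Fin s) = Module.finrank R L := by
    simp [hm, hds]
  obtain ⟨b, hb⟩ := aux_basis_of_tmul B bk2 hB hcard
  have hrange : LinearMap.range f = Submodule.span R (Set.range (fun i => b (Sum.inl i))) := by
    apply le_antisymm
    · rintro _ ⟨z, rfl⟩
      have hw : ExteriorAlgebra.ιMulti R (d+1) (Fin.cons (f z) (fun i => b (Sum.inl i))) = 0 := by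
        have hmem : ExteriorAlgebra.ιMulti R (d+1) (Fin.cons z x) ∈ ⋀[R]^(d+1) L :=
          ExteriorAlgebra.ιMulti_range R (d+1) ⟨Fin.cons z x, rfl⟩
        have h0 := hf _ hmem
        rw [ExteriorAlgebra.map_apply_ιMulti] at h0
        have hfun : (⇑f) ∘ (Fin.cons z x) = Fin.cons (f z) (fun i => b (Sum.inl i)) := by
          funext u
          refine Fin.cases ?_ (fun u' => ?_) u
          · simp
          · simp [hb, hBdef]
        rw [hfun] at h0
        exact h0
      have himg : Set.range (fun i => b (Sum.inl i)) = b '' (Set.range Sum.inl) := by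
        rw [← Set.range_comp]; rfl
      rw [himg, Module.Basis.mem_span_image]
      intro i hi
      rcases i with t | t
      · exact ⟨t, rfl⟩
      · exact absurd (aux_repr_zero b (f z) t hw) (Finsupp.mem_support_iff.mp hi)
    · rw [Submodule.span_le]
      rintro _ ⟨i, rfl⟩
      show b (Sum.inl i) ∈ LinearMap.range f
      rw [hb]
      exact ⟨x i, rfl⟩
  obtain ⟨E⟩ := aux_quot b
  let E' : (L ⧸ LinearMap.range f) ≃ₗ[R] (Fin s →₀ R) :=
    (Submodule.quotEquivOfEq _ _ hrange) ≪≫ₗ E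
  constructor
  · exact Module.Free.of_equiv E'.symm
  · rw [E'.finrank_eq, Module.finrank_finsupp_self, Fintype.card_fin]
end

section
/- Let R be a commutative ring and A an augmented R-algebra. Let B₁ → A and B₂ → A be versal small deformations of A such that each kernel ker(B_i → A) is a finitely generated ideal of B_i. Then there exists a versal small deformation C → A together with surjections of augmented R-algebras C → B₁ and C → B₂ that are compatible with the given maps to A. -/
/-!
**Statement 19** (Lemma A.2 of the paper).

Let `R` be a commutative ring and `A` an augmented `R`-algebra.  If `B₁ → A` and
`B₂ → A` are versal small deformations of `A` with finitely generated kernels, then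
there exists a versal small deformation `C → A` together with surjections of augmented
`R`-algebras `C → B₁` and `C → B₂` compatible with the given maps to `A`.
-/

/-- An augmented `R`-algebra: a commutative `R`-algebra together with an `R`-algebra
homomorphism to `R` (the augmentation). -/
structure AugAlg (R : Type) [CommRing R] where
  carrier : Type
  [ring : CommRing carrier]
  [alg : Algebra R carrier]
  aug : carrier →ₐ[R] R

attribute [instance] AugAlg.ring AugAlg.alg

variable {R : Type} [CommRing R]

/-- A small deformation of an augmented `R`-algebra `A`: a surjection `π : B → A` of
augmented `R`-algebras such that `I_B · ker π = 0`. -/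
structure SmallDef (A : AugAlg R) where
  B : AugAlg R
  π : B.carrier →ₐ[R] A.carrier
  surj : Function.Surjective π
  aug_comp : A.aug.comp π = B.aug
  small : ∀ b ∈ RingHom.ker B.aug, ∀ x ∈ RingHom.ker π, b * x = 0

/-- Versality of a small deformation `D` of `A`: `D.B` is a finitely presented
`R`-algebra and `D.π` is projective among small deformations: every surjection
`C → D.B` of small deformations of `A` admits a section of augmented `R`-algebras
compatible with the maps to `A`. -/
def SmallDef.IsVersal {A : AugAlg R} (D : SmallDef A) : Prop :=
  Algebra.FinitePresentation R D.B.carrier ∧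
    ∀ (C : SmallDef A) (q : C.B.carrier →ₐ[R] D.B.carrier),
      Function.Surjective q → D.π.comp q = C.π → D.B.aug.comp q = C.B.aug →
        ∃ s : D.B.carrier →ₐ[R] C.B.carrier,
          q.comp s = AlgHom.id R D.B.carrier ∧ C.π.comp s = D.π ∧
            C.B.aug.comp s = D.B.aug

open scoped TensorProduct

section Aux

variable {A : AugAlg R}

/-- The trivial small deformation `A → A`. -/
def SmallDef.trivial (A : AugAlg R) : SmallDef A where
  B := A
  π := AlgHom.id R A.carrier
  surj := Function.surjective_id
  aug_comp := AlgHom.comp_id _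
  small := by
    intro b hb x hx
    rw [RingHom.mem_ker] at hx
    simp only [AlgHom.coe_id, id_eq] at hx
    rw [hx, mul_zero]

/-- Kernel of `π` is contained in the augmentation ideal. -/
theorem SmallDef.aug_eq_zero (D : SmallDef A) {x : D.B.carrier} (hx : D.π x = 0) :
    D.B.aug x = 0 := by
  rw [← D.aug_comp, AlgHom.comp_apply, hx, map_zero]

/-- The key lifting lemma: a versal small deformation lifts arbitrary maps of
small deformations along surjections. -/
theorem SmallDef.lift_of_versal (D C E : SmallDef A) (hD : D.IsVersal)
    (w : E.B.carrier →ₐ[R] C.B.carrier) (hw : Function.Surjective w)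
    (hwπ : C.π.comp w = E.π) (hwa : C.B.aug.comp w = E.B.aug)
    (f : D.B.carrier →ₐ[R] C.B.carrier) (hfπ : C.π.comp f = D.π)
    (hfa : C.B.aug.comp f = D.B.aug) :
    ∃ t : D.B.carrier →ₐ[R] E.B.carrier,
      w.comp t = f ∧ E.π.comp t = D.π ∧ E.B.aug.comp t = D.B.aug := by
  -- the fiber product of `w` and `f` as a subalgebra of `E.B × D.B`
  set S : Subalgebra R (E.B.carrier × D.B.carrier) :=
    AlgHom.equalizer (w.comp (AlgHom.fst R E.B.carrier D.B.carrier))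
      (f.comp (AlgHom.snd R E.B.carrier D.B.carrier)) with hSdef
  have hmem : ∀ s : S, w s.1.1 = f s.1.2 := fun s => s.2
  let augF : S →ₐ[R] R := D.B.aug.comp ((AlgHom.snd R E.B.carrier D.B.carrier).comp S.val)
  let F : SmallDef A :=
    { B := { carrier := S, aug := augF }
      π := D.π.comp ((AlgHom.snd R E.B.carrier D.B.carrier).comp S.val)
      surj := by
        intro a
        obtain ⟨d, hd⟩ := D.surj a
        obtain ⟨e, he⟩ := hw (f d)
        exact ⟨⟨(e, d), he⟩, hd⟩
      aug_comp := by
        apply AlgHom.ext; intro s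
        exact AlgHom.congr_fun D.aug_comp s.1.2
      small := by
        intro b hb x hx
        rw [RingHom.mem_ker] at hb hx
        have hb2 : D.B.aug b.1.2 = 0 := hb
        have hx2 : D.π x.1.2 = 0 := hx
        have hb1 : E.B.aug b.1.1 = 0 := by
          have := AlgHom.congr_fun hwa b.1.1
          rw [AlgHom.comp_apply] at this
          rw [← this, hmem b, ← AlgHom.comp_apply, hfa, hb2]
        have hx1 : E.π x.1.1 = 0 := by
          have := AlgHom.congr_fun hwπ x.1.1
          rw [AlgHom.comp_apply] at this
          rw [← this, hmem x, ← AlgHom.comp_apply, hfπ, hx2]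
        apply Subtype.ext
        apply Prod.ext
        · exact E.small b.1.1 (RingHom.mem_ker.mpr hb1) x.1.1 (RingHom.mem_ker.mpr hx1)
        · exact D.small b.1.2 (RingHom.mem_ker.mpr hb2) x.1.2 (RingHom.mem_ker.mpr hx2) }
  obtain ⟨s, hs1, _, _⟩ := hD.2 F ((AlgHom.snd R E.B.carrier D.B.carrier).comp S.val)
    (by
      intro d
      obtain ⟨e, he⟩ := hw (f d)
      exact ⟨⟨(e, d), he⟩, rfl⟩)
    rfl rfl
  refine ⟨((AlgHom.fst R E.B.carrier D.B.carrier).comp S.val).comp s, ?_, ?_, ?_⟩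
  · apply AlgHom.ext; intro d
    have h1 : w (s d).1.1 = f (s d).1.2 := hmem (s d)
    have h2 : (s d).1.2 = d := AlgHom.congr_fun hs1 d
    show w (s d).1.1 = f d
    rw [h1, h2]
  · apply AlgHom.ext; intro d
    have h1 : w (s d).1.1 = f (s d).1.2 := hmem (s d)
    have h2 : (s d).1.2 = d := AlgHom.congr_fun hs1 d
    have h3 : C.π (w (s d).1.1) = E.π (s d).1.1 := AlgHom.congr_fun hwπ (s d).1.1
    show E.π (s d).1.1 = D.π d
    rw [← h3, h1, h2]
    exact AlgHom.congr_fun hfπ d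
  · apply AlgHom.ext; intro d
    have h1 : w (s d).1.1 = f (s d).1.2 := hmem (s d)
    have h2 : (s d).1.2 = d := AlgHom.congr_fun hs1 d
    have h3 : C.B.aug (w (s d).1.1) = E.B.aug (s d).1.1 := AlgHom.congr_fun hwa (s d).1.1
    show E.B.aug (s d).1.1 = D.B.aug d
    rw [← h3, h1, h2]
    exact AlgHom.congr_fun hfa d

end Aux

section Main

open scoped TensorProduct
open Algebra.TensorProduct

namespace St19

variable {A : AugAlg R} (D₁ D₂ : SmallDef A)

/-- The tensor product of the two deformations. -/
abbrev T : Type := D₁.B.carrier ⊗[R] D₂.B.carrier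

/-- The augmentation of the tensor product. -/
noncomputable def augT : T D₁ D₂ →ₐ[R] R := Algebra.TensorProduct.productMap D₁.B.aug D₂.B.aug

/-- The map from the tensor product to `A`. -/
noncomputable def muT : T D₁ D₂ →ₐ[R] A.carrier := Algebra.TensorProduct.productMap D₁.π D₂.π

@[simp] theorem augT_tmul (a : D₁.B.carrier) (b : D₂.B.carrier) :
    augT D₁ D₂ (a ⊗ₜ b) = D₁.B.aug a * D₂.B.aug b := rfl

@[simp] theorem muT_tmul (a : D₁.B.carrier) (b : D₂.B.carrier) :
    muT D₁ D₂ (a ⊗ₜ b) = D₁.π a * D₂.π b := rfl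

/-- The ideal we quotient by to make the deformation small. -/
noncomputable def J : Ideal (T D₁ D₂) := RingHom.ker (augT D₁ D₂) * RingHom.ker (muT D₁ D₂)

theorem J_le_ker_aug : J D₁ D₂ ≤ RingHom.ker (augT D₁ D₂) := Ideal.mul_le_left
theorem J_le_ker_mu : J D₁ D₂ ≤ RingHom.ker (muT D₁ D₂) := Ideal.mul_le_right

theorem aug_comp_mu : A.aug.comp (muT D₁ D₂) = augT D₁ D₂ := by
  apply Algebra.TensorProduct.ext'
  intro a b
  rw [AlgHom.comp_apply, muT_tmul, map_mul, augT_tmul]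
  rw [show A.aug (D₁.π a) = D₁.B.aug a from AlgHom.congr_fun D₁.aug_comp a,
    show A.aug (D₂.π b) = D₂.B.aug b from AlgHom.congr_fun D₂.aug_comp b]

theorem J_aug_zero : ∀ a ∈ J D₁ D₂, augT D₁ D₂ a = 0 :=
  fun a ha => RingHom.mem_ker.mp (J_le_ker_aug D₁ D₂ ha)

theorem J_mu_zero : ∀ a ∈ J D₁ D₂, muT D₁ D₂ a = 0 :=
  fun a ha => RingHom.mem_ker.mp (J_le_ker_mu D₁ D₂ ha)

/-- The augmentation on the quotient. -/
noncomputable def augC : (T D₁ D₂ ⧸ J D₁ D₂) →ₐ[R] R :=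
  Ideal.Quotient.liftₐ _ (augT D₁ D₂) (J_aug_zero D₁ D₂)

/-- The structure map to `A` on the quotient. -/
noncomputable def piC : (T D₁ D₂ ⧸ J D₁ D₂) →ₐ[R] A.carrier :=
  Ideal.Quotient.liftₐ _ (muT D₁ D₂) (J_mu_zero D₁ D₂)

@[simp] theorem augC_mk (a : T D₁ D₂) :
    augC D₁ D₂ (Ideal.Quotient.mk _ a) = augT D₁ D₂ a :=
  AlgHom.congr_fun (Ideal.Quotient.liftₐ_comp (J D₁ D₂) (augT D₁ D₂) (J_aug_zero D₁ D₂)) a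

@[simp] theorem piC_mk (a : T D₁ D₂) :
    piC D₁ D₂ (Ideal.Quotient.mk _ a) = muT D₁ D₂ a :=
  AlgHom.congr_fun (Ideal.Quotient.liftₐ_comp (J D₁ D₂) (muT D₁ D₂) (J_mu_zero D₁ D₂)) a

/-- The augmented algebra `C = T/J`. -/
noncomputable def CB : AugAlg R := { carrier := T D₁ D₂ ⧸ J D₁ D₂, aug := augC D₁ D₂ }

/-- The small deformation `C → A`. -/
noncomputable def Cdef : SmallDef A where
  B := CB D₁ D₂
  π := piC D₁ D₂
  surj := by
    intro a
    obtain ⟨b₁, hb₁⟩ := D₁.surj a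
    refine ⟨Ideal.Quotient.mk _ (b₁ ⊗ₜ 1), ?_⟩
    show piC D₁ D₂ (Ideal.Quotient.mk _ (b₁ ⊗ₜ 1)) = a
    rw [piC_mk, muT_tmul, map_one, mul_one, hb₁]
  aug_comp := by
    apply AlgHom.ext
    intro x
    obtain ⟨a, rfl⟩ := Ideal.Quotient.mk_surjective x
    show A.aug (piC D₁ D₂ (Ideal.Quotient.mk _ a)) = augC D₁ D₂ (Ideal.Quotient.mk _ a)
    rw [piC_mk, augC_mk, ← aug_comp_mu, AlgHom.comp_apply]
  small := by
    intro b hb x hx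
    obtain ⟨b', rfl⟩ := Ideal.Quotient.mk_surjective b
    obtain ⟨x', rfl⟩ := Ideal.Quotient.mk_surjective x
    change augC D₁ D₂ (Ideal.Quotient.mk _ b') = 0 at hb
    change piC D₁ D₂ (Ideal.Quotient.mk _ x') = 0 at hx
    have hb' : augT D₁ D₂ b' = 0 := by rw [← augC_mk]; exact hb
    have hx' : muT D₁ D₂ x' = 0 := by rw [← piC_mk]; exact hx
    show Ideal.Quotient.mk (J D₁ D₂) (b' * x') = 0
    rw [Ideal.Quotient.eq_zero_iff_mem]
    exact Ideal.mul_mem_mul (RingHom.mem_ker.mpr hb') (RingHom.mem_ker.mpr hx')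

/-- The canonical map `B₁ → C`. -/
noncomputable def iota1 : D₁.B.carrier →ₐ[R] (T D₁ D₂ ⧸ J D₁ D₂) :=
  (Ideal.Quotient.mkₐ R (J D₁ D₂)).comp Algebra.TensorProduct.includeLeft

/-- The canonical map `B₂ → C`. -/
noncomputable def iota2 : D₂.B.carrier →ₐ[R] (T D₁ D₂ ⧸ J D₁ D₂) :=
  (Ideal.Quotient.mkₐ R (J D₁ D₂)).comp Algebra.TensorProduct.includeRight

theorem iota1_apply (b₁ : D₁.B.carrier) :
    iota1 D₁ D₂ b₁ = Ideal.Quotient.mk _ (b₁ ⊗ₜ 1) := rfl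

theorem iota2_apply (b₂ : D₂.B.carrier) :
    iota2 D₁ D₂ b₂ = Ideal.Quotient.mk _ ((1 : D₁.B.carrier) ⊗ₜ b₂) := rfl

theorem piC_iota1 : (Cdef D₁ D₂).π.comp (iota1 D₁ D₂) = D₁.π := by
  apply AlgHom.ext
  intro b₁
  show piC D₁ D₂ (Ideal.Quotient.mk _ (b₁ ⊗ₜ 1)) = D₁.π b₁
  rw [piC_mk, muT_tmul, map_one, mul_one]

theorem augC_iota1 : (Cdef D₁ D₂).B.aug.comp (iota1 D₁ D₂) = D₁.B.aug := by
  apply AlgHom.ext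
  intro b₁
  show augC D₁ D₂ (Ideal.Quotient.mk _ (b₁ ⊗ₜ 1)) = D₁.B.aug b₁
  rw [augC_mk, augT_tmul, map_one, mul_one]

theorem piC_iota2 : (Cdef D₁ D₂).π.comp (iota2 D₁ D₂) = D₂.π := by
  apply AlgHom.ext
  intro b₂
  show piC D₁ D₂ (Ideal.Quotient.mk _ ((1 : D₁.B.carrier) ⊗ₜ b₂)) = D₂.π b₂
  rw [piC_mk, muT_tmul, map_one, one_mul]

theorem augC_iota2 : (Cdef D₁ D₂).B.aug.comp (iota2 D₁ D₂) = D₂.B.aug := by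
  apply AlgHom.ext
  intro b₂
  show augC D₁ D₂ (Ideal.Quotient.mk _ ((1 : D₁.B.carrier) ⊗ₜ b₂)) = D₂.B.aug b₂
  rw [augC_mk, augT_tmul, map_one, one_mul]

/-- Any algebra map out of `T` compatible with the augmentations and the maps to `A`
kills the ideal `J`, provided the target is small over `A`. -/
theorem kills_J (Dx : SmallDef A) (g : T D₁ D₂ →ₐ[R] Dx.B.carrier)
    (hga : Dx.B.aug.comp g = augT D₁ D₂) (hgπ : Dx.π.comp g = muT D₁ D₂) :
    ∀ a ∈ J D₁ D₂, g a = 0 := by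
  have hle : J D₁ D₂ ≤ RingHom.ker g := by
    refine Ideal.mul_le.mpr ?_
    intro i hi j hj
    rw [RingHom.mem_ker] at hi hj ⊢
    rw [map_mul]
    apply Dx.small
    · rw [RingHom.mem_ker,
        show Dx.B.aug (g i) = augT D₁ D₂ i from AlgHom.congr_fun hga i]
      exact hi
    · rw [RingHom.mem_ker,
        show Dx.π (g j) = muT D₁ D₂ j from AlgHom.congr_fun hgπ j]
      exact hj
  exact fun a ha => RingHom.mem_ker.mp (hle ha)

/-- Lift of a compatible map out of `T` to the quotient `C`. -/
noncomputable def liftQ (Dx : SmallDef A) (g : T D₁ D₂ →ₐ[R] Dx.B.carrier)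
    (hga : Dx.B.aug.comp g = augT D₁ D₂) (hgπ : Dx.π.comp g = muT D₁ D₂) :
    (T D₁ D₂ ⧸ J D₁ D₂) →ₐ[R] Dx.B.carrier :=
  Ideal.Quotient.liftₐ _ g (kills_J D₁ D₂ Dx g hga hgπ)

@[simp] theorem liftQ_mk (Dx : SmallDef A) (g : T D₁ D₂ →ₐ[R] Dx.B.carrier)
    (hga : Dx.B.aug.comp g = augT D₁ D₂) (hgπ : Dx.π.comp g = muT D₁ D₂) (a : T D₁ D₂) :
    liftQ D₁ D₂ Dx g hga hgπ (Ideal.Quotient.mk _ a) = g a :=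
  AlgHom.congr_fun (Ideal.Quotient.liftₐ_comp (J D₁ D₂) g (kills_J D₁ D₂ Dx g hga hgπ)) a

end St19

end Main

open scoped TensorProduct

/-- **Statement 19.** Any two versal small deformations with finitely generated kernels
are dominated by a common versal small deformation. -/
theorem statement19 (A : AugAlg R) (D₁ D₂ : SmallDef A)
    (h₁ : D₁.IsVersal) (h₂ : D₂.IsVersal)
    (hfg₁ : (RingHom.ker D₁.π.toRingHom).FG) (hfg₂ : (RingHom.ker D₂.π.toRingHom).FG) :
    ∃ C : SmallDef A, C.IsVersal ∧
      ∃ (q₁ : C.B.carrier →ₐ[R] D₁.B.carrier) (q₂ : C.B.carrier →ₐ[R] D₂.B.carrier),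
        Function.Surjective q₁ ∧ Function.Surjective q₂ ∧
          D₁.π.comp q₁ = C.π ∧ D₂.π.comp q₂ = C.π ∧
          D₁.B.aug.comp q₁ = C.B.aug ∧ D₂.B.aug.comp q₂ = C.B.aug := by
  classical
  -- a map `u : B₁ → B₂` over `A`, compatible with the augmentations
  obtain ⟨u, hu, -, hua⟩ := SmallDef.lift_of_versal D₁ (SmallDef.trivial A) D₂ h₁
    D₂.π D₂.surj (AlgHom.ext fun _ => rfl) D₂.aug_comp
    D₁.π (AlgHom.ext fun _ => rfl) D₁.aug_comp
  -- a map `v : B₂ → B₁` over `A`, compatible with the augmentations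
  obtain ⟨v, hv, -, hva⟩ := SmallDef.lift_of_versal D₂ (SmallDef.trivial A) D₁ h₂
    D₁.π D₁.surj (AlgHom.ext fun _ => rfl) D₁.aug_comp
    D₂.π (AlgHom.ext fun _ => rfl) D₂.aug_comp
  -- the candidate: C = (B₁ ⊗ B₂) / (I ⬝ K)
  refine ⟨St19.Cdef D₁ D₂, ⟨?_, ?_⟩, ?_⟩
  · -- finite presentation
    haveI := h₁.1
    haveI := h₂.1
    haveI fpA : Algebra.FinitePresentation R A.carrier :=
      Algebra.FinitePresentation.of_surjective D₁.surj hfg₁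
    haveI fpT : Algebra.FinitePresentation R (St19.T D₁ D₂) :=
      Algebra.FinitePresentation.trans R D₁.B.carrier (St19.T D₁ D₂)
    have haugs : Function.Surjective (St19.augT D₁ D₂) := by
      intro r
      exact ⟨algebraMap R _ r, by simp⟩
    have hmus : Function.Surjective (St19.muT D₁ D₂) := by
      intro a
      obtain ⟨b₁, hb₁⟩ := D₁.surj a
      exact ⟨b₁ ⊗ₜ 1, by rw [St19.muT_tmul, map_one, mul_one, hb₁]⟩
    have fgI : (RingHom.ker (St19.augT D₁ D₂)).FG :=
      Algebra.FinitePresentation.ker_fG_of_surjective (St19.augT D₁ D₂) haugs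
    have fgK : (RingHom.ker (St19.muT D₁ D₂)).FG :=
      Algebra.FinitePresentation.ker_fG_of_surjective (St19.muT D₁ D₂) hmus
    have fgJ : (St19.J D₁ D₂).FG := Submodule.FG.mul fgI fgK
    exact Algebra.FinitePresentation.quotient fgJ
  · -- projectivity among small deformations
    intro E w hw hwπ hwa
    obtain ⟨t₁, ht₁, -, -⟩ := SmallDef.lift_of_versal D₁ (St19.Cdef D₁ D₂) E h₁
      w hw hwπ hwa (St19.iota1 D₁ D₂) (St19.piC_iota1 D₁ D₂) (St19.augC_iota1 D₁ D₂)
    obtain ⟨t₂, ht₂, -, -⟩ := SmallDef.lift_of_versal D₂ (St19.Cdef D₁ D₂) E h₂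
      w hw hwπ hwa (St19.iota2 D₁ D₂) (St19.piC_iota2 D₁ D₂) (St19.augC_iota2 D₁ D₂)
    have ht₁a : E.B.aug.comp t₁ = D₁.B.aug := by
      rw [← hwa, AlgHom.comp_assoc, ht₁, St19.augC_iota1]
    have ht₂a : E.B.aug.comp t₂ = D₂.B.aug := by
      rw [← hwa, AlgHom.comp_assoc, ht₂, St19.augC_iota2]
    have ht₁π : E.π.comp t₁ = D₁.π := by
      rw [← hwπ, AlgHom.comp_assoc, ht₁, St19.piC_iota1]
    have ht₂π : E.π.comp t₂ = D₂.π := by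
      rw [← hwπ, AlgHom.comp_assoc, ht₂, St19.piC_iota2]
    have hτa : E.B.aug.comp (Algebra.TensorProduct.productMap t₁ t₂) = St19.augT D₁ D₂ := by
      apply Algebra.TensorProduct.ext'
      intro a b
      rw [AlgHom.comp_apply, Algebra.TensorProduct.productMap_apply_tmul, map_mul,
        St19.augT_tmul,
        show E.B.aug (t₁ a) = D₁.B.aug a from AlgHom.congr_fun ht₁a a,
        show E.B.aug (t₂ b) = D₂.B.aug b from AlgHom.congr_fun ht₂a b]
    have hτπ : E.π.comp (Algebra.TensorProduct.productMap t₁ t₂) = St19.muT D₁ D₂ := by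
      apply Algebra.TensorProduct.ext'
      intro a b
      rw [AlgHom.comp_apply, Algebra.TensorProduct.productMap_apply_tmul, map_mul,
        St19.muT_tmul,
        show E.π (t₁ a) = D₁.π a from AlgHom.congr_fun ht₁π a,
        show E.π (t₂ b) = D₂.π b from AlgHom.congr_fun ht₂π b]
    have hws : w.comp (St19.liftQ D₁ D₂ E (Algebra.TensorProduct.productMap t₁ t₂) hτa hτπ)
        = AlgHom.id R (St19.Cdef D₁ D₂).B.carrier := by
      apply AlgHom.ext
      intro x
      obtain ⟨a, rfl⟩ := Ideal.Quotient.mk_surjective x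
      show w ((Algebra.TensorProduct.productMap t₁ t₂) a) = Ideal.Quotient.mk (St19.J D₁ D₂) a
      induction a using TensorProduct.induction_on with
      | zero => simp; rfl
      | tmul b₁ b₂ =>
        rw [Algebra.TensorProduct.productMap_apply_tmul, map_mul,
          show w (t₁ b₁) = St19.iota1 D₁ D₂ b₁ from AlgHom.congr_fun ht₁ b₁,
          show w (t₂ b₂) = St19.iota2 D₁ D₂ b₂ from AlgHom.congr_fun ht₂ b₂,
          St19.iota1_apply, St19.iota2_apply]
        show Ideal.Quotient.mk (St19.J D₁ D₂) ((b₁ ⊗ₜ 1) * ((1 : D₁.B.carrier) ⊗ₜ b₂)) = _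
        rw [Algebra.TensorProduct.tmul_mul_tmul, one_mul, mul_one]
      | add x y hx hy =>
        rw [map_add, map_add, map_add, hx, hy]
        rfl
    refine ⟨St19.liftQ D₁ D₂ E (Algebra.TensorProduct.productMap t₁ t₂) hτa hτπ, hws, ?_, ?_⟩
    · apply AlgHom.ext; intro x
      have := congrArg (St19.Cdef D₁ D₂).π (AlgHom.congr_fun hws x)
      rw [← hwπ]; exact this
    · apply AlgHom.ext; intro x
      have := congrArg (St19.Cdef D₁ D₂).B.aug (AlgHom.congr_fun hws x)
      rw [← hwa]; exact this
  · -- the two surjections `q₁ : C → B₁` and `q₂ : C → B₂`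
    have hga1 : D₁.B.aug.comp
        (Algebra.TensorProduct.productMap (AlgHom.id R D₁.B.carrier) v) = St19.augT D₁ D₂ := by
      apply Algebra.TensorProduct.ext'
      intro a b
      rw [AlgHom.comp_apply, Algebra.TensorProduct.productMap_apply_tmul, map_mul,
        St19.augT_tmul, AlgHom.id_apply,
        show D₁.B.aug (v b) = D₂.B.aug b from AlgHom.congr_fun hva b]
    have hgπ1 : D₁.π.comp
        (Algebra.TensorProduct.productMap (AlgHom.id R D₁.B.carrier) v) = St19.muT D₁ D₂ := by
      apply Algebra.TensorProduct.ext'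
      intro a b
      rw [AlgHom.comp_apply, Algebra.TensorProduct.productMap_apply_tmul, map_mul,
        St19.muT_tmul, AlgHom.id_apply,
        show D₁.π (v b) = D₂.π b from AlgHom.congr_fun hv b]
    have hga2 : D₂.B.aug.comp
        (Algebra.TensorProduct.productMap u (AlgHom.id R D₂.B.carrier)) = St19.augT D₁ D₂ := by
      apply Algebra.TensorProduct.ext'
      intro a b
      rw [AlgHom.comp_apply, Algebra.TensorProduct.productMap_apply_tmul, map_mul,
        St19.augT_tmul, AlgHom.id_apply,
        show D₂.B.aug (u a) = D₁.B.aug a from AlgHom.congr_fun hua a]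
    have hgπ2 : D₂.π.comp
        (Algebra.TensorProduct.productMap u (AlgHom.id R D₂.B.carrier)) = St19.muT D₁ D₂ := by
      apply Algebra.TensorProduct.ext'
      intro a b
      rw [AlgHom.comp_apply, Algebra.TensorProduct.productMap_apply_tmul, map_mul,
        St19.muT_tmul, AlgHom.id_apply,
        show D₂.π (u a) = D₁.π a from AlgHom.congr_fun hu a]
    refine ⟨St19.liftQ D₁ D₂ D₁ _ hga1 hgπ1, St19.liftQ D₁ D₂ D₂ _ hga2 hgπ2,
      ?_, ?_, ?_, ?_, ?_, ?_⟩
    · intro b₁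
      refine ⟨Ideal.Quotient.mk _ (b₁ ⊗ₜ 1), ?_⟩
      show (Algebra.TensorProduct.productMap (AlgHom.id R D₁.B.carrier) v) (b₁ ⊗ₜ 1) = b₁
      rw [Algebra.TensorProduct.productMap_apply_tmul, map_one, mul_one, AlgHom.id_apply]
    · intro b₂
      refine ⟨Ideal.Quotient.mk _ ((1 : D₁.B.carrier) ⊗ₜ b₂), ?_⟩
      show (Algebra.TensorProduct.productMap u (AlgHom.id R D₂.B.carrier))
        ((1 : D₁.B.carrier) ⊗ₜ b₂) = b₂
      rw [Algebra.TensorProduct.productMap_apply_tmul, map_one, one_mul, AlgHom.id_apply]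
    · apply AlgHom.ext
      intro x
      obtain ⟨a, rfl⟩ := Ideal.Quotient.mk_surjective x
      exact (AlgHom.congr_fun hgπ1 a).trans (St19.piC_mk D₁ D₂ a).symm
    · apply AlgHom.ext
      intro x
      obtain ⟨a, rfl⟩ := Ideal.Quotient.mk_surjective x
      exact (AlgHom.congr_fun hgπ2 a).trans (St19.piC_mk D₁ D₂ a).symm
    · apply AlgHom.ext
      intro x
      obtain ⟨a, rfl⟩ := Ideal.Quotient.mk_surjective x
      exact (AlgHom.congr_fun hga1 a).trans (St19.augC_mk D₁ D₂ a).symm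
    · apply AlgHom.ext
      intro x
      obtain ⟨a, rfl⟩ := Ideal.Quotient.mk_surjective x
      exact (AlgHom.congr_fun hga2 a).trans (St19.augC_mk D₁ D₂ a).symm
end
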